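/- Let G = (V,E) be a finite simple graph, k_e ≥ 1 integers for e ∈ E, and G' the even subdivision of G. Then for every independent set 𝒮 of G there exists an independent set S of G' with S ∩ V = 𝒮 and |S| = |𝒮| + Σ_{e∈E} k_e. In particular, every maximum independent set of G is the restriction to V of some maximum independent set of G'. -/

import Mathlib

open scoped Classical

/-- The independence number `α(G)`: the maximum size of an independent set. -/
noncomputable def indepNum {V : Type*} [Fintype V] (G : SimpleGraph V) : ℕ :=
  Finset.sup
    (Finset.univ.filter fun S : Finset V => ∀ u ∈ S, ∀ v ∈ S, ¬ G.Adj u v)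
    Finset.card


/-- The even subdivision of `G`: every edge `e = {fst e, snd e}` is replaced by a
path `fst e — w^e_0 — w^e_1 — ⋯ — w^e_{2k_e - 1} — snd e` through `2 * k e` new
vertices (the new vertices for edge `e` being `Sum.inr ⟨e, i⟩` for `i : Fin (2 * k e)`);
in particular the original edge itself is removed. Here `fst, snd : G.edgeSet → V`
is any choice of orientation of the edges of `G`. -/
def evenSubdivision {V : Type*} (G : SimpleGraph V) (k : Sym2 V → ℕ)
    (fst snd : G.edgeSet → V) :
    SimpleGraph (V ⊕ Σ e : G.edgeSet, Fin (2 * k e)) :=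
  SimpleGraph.fromRel fun a b =>
    (∃ (e : G.edgeSet) (i : Fin (2 * k e)), (i : ℕ) = 0 ∧
        a = Sum.inl (fst e) ∧ b = Sum.inr ⟨e, i⟩)
    ∨ (∃ (e : G.edgeSet) (i j : Fin (2 * k e)), (j : ℕ) = (i : ℕ) + 1 ∧
        a = Sum.inr ⟨e, i⟩ ∧ b = Sum.inr ⟨e, j⟩)
    ∨ (∃ (e : G.edgeSet) (i : Fin (2 * k e)), (i : ℕ) = 2 * k e - 1 ∧
        a = Sum.inr ⟨e, i⟩ ∧ b = Sum.inl (snd e))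


lemma card_filter_mod_range (n r : ℕ) (hr : r < 2) :
    ((Finset.range (2*n)).filter (fun i => i % 2 = r)).card = n := by
  induction n with
  | zero => simp
  | succ m ih =>
    have h2 : 2 * (m+1) = (2*m + 1) + 1 := by ring
    rw [h2, Finset.range_add_one, Finset.range_add_one, Finset.filter_insert, Finset.filter_insert]
    rcases (by omega : r = 0 ∨ r = 1) with rfl | rfl
    · rw [if_neg (by omega), if_pos (by omega),
        Finset.card_insert_of_notMem (by simp), ih]
    · rw [if_pos (by omega)]
      rw [Finset.card_insert_of_notMem (by simp)]
      rw [if_neg (by omega), ih]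

lemma card_filter_mod_fin (n r : ℕ) (hr : r < 2) :
    ((Finset.univ : Finset (Fin (2*n))).filter (fun i : Fin (2*n) => (i:ℕ) % 2 = r)).card = n := by
  have himg : ((Finset.univ : Finset (Fin (2*n))).filter (fun i : Fin (2*n) => (i:ℕ) % 2 = r)).image Fin.val
      = (Finset.range (2*n)).filter (fun i => i % 2 = r) := ?_
  · rw [← Finset.card_image_of_injective
      ((Finset.univ : Finset (Fin (2*n))).filter (fun i : Fin (2*n) => (i:ℕ) % 2 = r)) Fin.val_injective,
      himg, card_filter_mod_range n r hr]
  ext a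
  simp only [Finset.mem_image, Finset.mem_filter, Finset.mem_range, Finset.mem_univ, true_and]
  constructor
  · rintro ⟨i, hi, rfl⟩; exact ⟨i.isLt, hi⟩
  · rintro ⟨ha, hr'⟩; exact ⟨⟨a, ha⟩, hr', rfl⟩

lemma card_le_of_no_consec {n : ℕ} (T : Finset (Fin (2*n)))
    (h : ∀ i ∈ T, ∀ j ∈ T, (j:ℕ) ≠ (i:ℕ) + 1) : T.card ≤ n := by
  have := Finset.card_le_card_of_injOn (s := T) (t := Finset.range n)
    (fun i : Fin (2*n) => (i:ℕ)/2) ?_ ?_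
  · simpa using this
  · intro i _
    simp only [Finset.mem_coe, Finset.mem_range]
    have := i.isLt
    omega
  · intro i hi j hj hij
    simp only at hij
    have h1 := h i hi j hj
    have h2 := h j hj i hi
    exact Fin.ext (by omega)

lemma card_le_of_no_consec' {n : ℕ} (hn : 1 ≤ n) (T : Finset (Fin (2*n)))
    (h : ∀ i ∈ T, ∀ j ∈ T, (j:ℕ) ≠ (i:ℕ) + 1)
    (h0 : ∀ i ∈ T, (i:ℕ) ≠ 0) (h1 : ∀ i ∈ T, (i:ℕ) ≠ 2*n - 1) : T.card + 1 ≤ n := by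
  have := Finset.card_le_card_of_injOn (s := T) (t := Finset.range (n-1))
    (fun i : Fin (2*n) => ((i:ℕ)-1)/2) ?_ ?_
  · rw [Finset.card_range] at this; omega
  · intro i hi
    simp only [Finset.mem_coe, Finset.mem_range]
    have := i.isLt
    have := h0 i hi
    have := h1 i hi
    omega
  · intro i hi j hj hij
    simp only at hij
    have ha := h i hi j hj
    have hb := h j hj i hi
    have := h0 i hi
    have := h0 j hj
    exact Fin.ext (by omega)

lemma inr_sigma_inj {V : Type*} {G : SimpleGraph V} {k : Sym2 V → ℕ} {e e' : G.edgeSet}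
    {i : Fin (2*k e)} {i' : Fin (2*k e')}
    (h : (Sum.inr ⟨e,i⟩ : V ⊕ Σ e : G.edgeSet, Fin (2*k e)) = Sum.inr ⟨e',i'⟩) :
    e = e' ∧ (i:ℕ) = (i':ℕ) := by
  injection h with h
  obtain ⟨h1, h2⟩ := Sigma.mk.inj_iff.mp h
  subst h1
  exact ⟨rfl, congrArg Fin.val (eq_of_heq h2)⟩

lemma esd_adj_elim {V : Type*} {G : SimpleGraph V} {k : Sym2 V → ℕ} {fst snd : G.edgeSet → V}
    {a b : V ⊕ Σ e : G.edgeSet, Fin (2 * k e)}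
    (h : (evenSubdivision G k fst snd).Adj a b) :
    (∃ (e : G.edgeSet) (i : Fin (2 * k e)), (i:ℕ) = 0 ∧
      ((a = Sum.inl (fst e) ∧ b = Sum.inr ⟨e,i⟩) ∨ (b = Sum.inl (fst e) ∧ a = Sum.inr ⟨e,i⟩)))
    ∨ (∃ (e : G.edgeSet) (i j : Fin (2*k e)), (j:ℕ) = (i:ℕ) + 1 ∧
      ((a = Sum.inr ⟨e,i⟩ ∧ b = Sum.inr ⟨e,j⟩) ∨ (b = Sum.inr ⟨e,i⟩ ∧ a = Sum.inr ⟨e,j⟩)))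
    ∨ (∃ (e : G.edgeSet) (i : Fin (2*k e)), (i:ℕ) = 2*k e - 1 ∧
      ((a = Sum.inr ⟨e,i⟩ ∧ b = Sum.inl (snd e)) ∨ (b = Sum.inr ⟨e,i⟩ ∧ a = Sum.inl (snd e)))) := by
  rw [evenSubdivision, SimpleGraph.fromRel_adj] at h
  obtain ⟨-, h | h⟩ := h <;>
    rcases h with ⟨e,i,hi,ha,hb⟩ | ⟨e,i,j,hij,ha,hb⟩ | ⟨e,i,hi,ha,hb⟩
  · exact Or.inl ⟨e,i,hi,Or.inl ⟨ha,hb⟩⟩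
  · exact Or.inr (Or.inl ⟨e,i,j,hij,Or.inl ⟨ha,hb⟩⟩)
  · exact Or.inr (Or.inr ⟨e,i,hi,Or.inl ⟨ha,hb⟩⟩)
  · exact Or.inl ⟨e,i,hi,Or.inr ⟨ha,hb⟩⟩
  · exact Or.inr (Or.inl ⟨e,i,j,hij,Or.inr ⟨ha,hb⟩⟩)
  · exact Or.inr (Or.inr ⟨e,i,hi,Or.inr ⟨ha,hb⟩⟩)


theorem indep_extends_to_evenSubdivision {V : Type*} [Fintype V] [DecidableEq V]
    (G : SimpleGraph V) [DecidableRel G.Adj]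
    (k : Sym2 V → ℕ) (hk : ∀ e ∈ G.edgeSet, 1 ≤ k e)
    (fst snd : G.edgeSet → V)
    (hends : ∀ e : G.edgeSet, (e : Sym2 V) = s(fst e, snd e)) :
    (∀ 𝒮 : Finset V, (∀ u ∈ 𝒮, ∀ v ∈ 𝒮, ¬ G.Adj u v) →
      ∃ S : Finset (V ⊕ Σ e : G.edgeSet, Fin (2 * k e)),
        (∀ a ∈ S, ∀ b ∈ S, ¬ (evenSubdivision G k fst snd).Adj a b) ∧
        (∀ x : V, Sum.inl x ∈ S ↔ x ∈ 𝒮) ∧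
        S.card = 𝒮.card + ∑ e : G.edgeSet, k e) ∧
    (∀ 𝒮 : Finset V,
      (∀ u ∈ 𝒮, ∀ v ∈ 𝒮, ¬ G.Adj u v) → 𝒮.card = indepNum G →
      ∃ S : Finset (V ⊕ Σ e : G.edgeSet, Fin (2 * k e)),
        (∀ a ∈ S, ∀ b ∈ S, ¬ (evenSubdivision G k fst snd).Adj a b) ∧
        (∀ x : V, Sum.inl x ∈ S ↔ x ∈ 𝒮) ∧
        S.card = indepNum (evenSubdivision G k fst snd)) := by
  classical
  -- basic facts
  have hadjG : ∀ e : G.edgeSet, G.Adj (fst e) (snd e) := by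
    intro e
    have he := e.2
    rw [hends e, SimpleGraph.mem_edgeSet] at he
    exact he
  have hk' : ∀ e : G.edgeSet, 1 ≤ k e := fun e => hk e e.2
  -- Part 1 : the construction
  have main : ∀ 𝒮 : Finset V, (∀ u ∈ 𝒮, ∀ v ∈ 𝒮, ¬ G.Adj u v) →
      ∃ S : Finset (V ⊕ Σ e : G.edgeSet, Fin (2 * k e)),
        (∀ a ∈ S, ∀ b ∈ S, ¬ (evenSubdivision G k fst snd).Adj a b) ∧
        (∀ x : V, Sum.inl x ∈ S ↔ x ∈ 𝒮) ∧
        S.card = 𝒮.card + ∑ e : G.edgeSet, k e := by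
    intro 𝒮 h𝒮
    set P : ∀ e : G.edgeSet, Finset (Fin (2 * k e)) := fun e =>
      if fst e ∈ 𝒮 then Finset.univ.filter (fun i : Fin (2 * k e) => (i:ℕ) % 2 = 1)
      else Finset.univ.filter (fun i : Fin (2 * k e) => (i:ℕ) % 2 = 0) with hP
    set S : Finset (V ⊕ Σ e : G.edgeSet, Fin (2 * k e)) :=
      𝒮.image Sum.inl ∪ (Finset.univ.sigma P).image Sum.inr with hS
    have memL : ∀ x : V, Sum.inl x ∈ S ↔ x ∈ 𝒮 := by
      intro x; simp [hS]
    have memR : ∀ (e : G.edgeSet) (i : Fin (2 * k e)), Sum.inr ⟨e, i⟩ ∈ S ↔ i ∈ P e := by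
      intro e i
      simp only [hS, Finset.mem_union, Finset.mem_image, Finset.mem_sigma, Finset.mem_univ,
        true_and]
      constructor
      · rintro ((⟨x, _, hx⟩) | ⟨p, hp, hq⟩)
        · exact absurd hx (by simp)
        · obtain ⟨e', i'⟩ := p
          obtain ⟨rfl, hii⟩ := inr_sigma_inj hq
          rwa [← Fin.ext hii]
      · intro hi; exact Or.inr ⟨⟨e, i⟩, hi, rfl⟩
    have memP : ∀ (e : G.edgeSet) (i : Fin (2 * k e)), i ∈ P e →
        (fst e ∈ 𝒮 ∧ (i:ℕ) % 2 = 1) ∨ (fst e ∉ 𝒮 ∧ (i:ℕ) % 2 = 0) := by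
      intro e i hi
      by_cases h : fst e ∈ 𝒮
      · left; refine ⟨h, ?_⟩; rw [hP] at hi; simp [h] at hi; exact hi
      · right; refine ⟨h, ?_⟩; rw [hP] at hi; simp [h] at hi; exact hi
    refine ⟨S, ?_, memL, ?_⟩
    · -- independence
      intro a ha b hb hadj
      rcases esd_adj_elim hadj with ⟨e, i, hi, hc⟩ | ⟨e, i, j, hij, hc⟩ | ⟨e, i, hi, hc⟩
      · -- endpoint fst e — first internal vertex
        have hfst : fst e ∈ 𝒮 ∧ i ∈ P e := by
          rcases hc with ⟨rfl, rfl⟩ | ⟨rfl, rfl⟩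
          · exact ⟨(memL _).mp ha, (memR e i).mp hb⟩
          · exact ⟨(memL _).mp hb, (memR e i).mp ha⟩
        rcases memP e i hfst.2 with ⟨_, hpar⟩ | ⟨hn, _⟩
        · omega
        · exact hn hfst.1
      · -- two internal vertices
        have hij' : i ∈ P e ∧ j ∈ P e := by
          rcases hc with ⟨rfl, rfl⟩ | ⟨rfl, rfl⟩
          · exact ⟨(memR e i).mp ha, (memR e j).mp hb⟩
          · exact ⟨(memR e i).mp hb, (memR e j).mp ha⟩
        rcases memP e i hij'.1 with ⟨_, hpi⟩ | ⟨_, hpi⟩ <;>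
          rcases memP e j hij'.2 with ⟨_, hpj⟩ | ⟨hn, hpj⟩ <;> first | omega | tauto
      · -- last internal vertex — endpoint snd e
        have hsnd : snd e ∈ 𝒮 ∧ i ∈ P e := by
          rcases hc with ⟨rfl, rfl⟩ | ⟨rfl, rfl⟩
          · exact ⟨(memL _).mp hb, (memR e i).mp ha⟩
          · exact ⟨(memL _).mp ha, (memR e i).mp hb⟩
        have hfn : fst e ∉ 𝒮 := fun hf => h𝒮 _ hf _ hsnd.1 (hadjG e)
        rcases memP e i hsnd.2 with ⟨hf, _⟩ | ⟨_, hpar⟩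
        · exact hfn hf
        · have := hk' e
          omega
    · -- cardinality
      have hdisj : Disjoint (𝒮.image Sum.inl)
          ((Finset.univ.sigma P).image (Sum.inr : (Σ e : G.edgeSet, Fin (2 * k e)) →
            V ⊕ Σ e : G.edgeSet, Fin (2 * k e))) := by
        rw [Finset.disjoint_left]
        rintro a ha hb
        obtain ⟨x, _, rfl⟩ := Finset.mem_image.mp ha
        obtain ⟨p, _, hp⟩ := Finset.mem_image.mp hb
        exact absurd hp (by simp)
      rw [hS, Finset.card_union_of_disjoint hdisj,
        Finset.card_image_of_injective _ Sum.inl_injective,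
        Finset.card_image_of_injective _ Sum.inr_injective,
        Finset.card_sigma]
      congr 1
      apply Finset.sum_congr rfl
      intro e _
      by_cases h : fst e ∈ 𝒮
      · rw [hP]; simp only [h, if_pos]; exact card_filter_mod_fin (k e) 1 (by omega)
      · rw [hP]; simp only [h, if_neg, not_false_iff]; exact card_filter_mod_fin (k e) 0 (by omega)
  refine ⟨main, ?_⟩
  -- Part 2 : maximum independent sets
  intro 𝒮 h𝒮 hcard
  obtain ⟨S, hS1, hS2, hS3⟩ := main 𝒮 h𝒮
  refine ⟨S, hS1, hS2, ?_⟩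
  have lower : S.card ≤ indepNum (evenSubdivision G k fst snd) := by
    apply Finset.le_sup (f := Finset.card)
    simp only [Finset.mem_filter, Finset.mem_univ, true_and]
    exact hS1
  have upper : indepNum (evenSubdivision G k fst snd) ≤ indepNum G + ∑ e : G.edgeSet, k e := by
    apply Finset.sup_le
    intro S' hS'
    simp only [Finset.mem_filter, Finset.mem_univ, true_and] at hS'
    -- decompose S'
    set A : Finset V := Finset.univ.filter (fun x => Sum.inl x ∈ S') with hA
    set B : ∀ e : G.edgeSet, Finset (Fin (2 * k e)) := fun e =>
      Finset.univ.filter (fun i => Sum.inr ⟨e, i⟩ ∈ S') with hB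
    have hsplit : S' = A.image Sum.inl ∪ (Finset.univ.sigma B).image Sum.inr := by
      ext a
      rcases a with x | ⟨e, i⟩
      · simp [hA]
      · simp only [Finset.mem_union, Finset.mem_image, Finset.mem_sigma, Finset.mem_univ,
          true_and, hB, Finset.mem_filter]
        constructor
        · intro h; exact Or.inr ⟨⟨e, i⟩, h, rfl⟩
        · rintro ((⟨x, _, hx⟩) | ⟨p, hp, hq⟩)
          · exact absurd hx (by simp)
          · obtain ⟨e', i'⟩ := p
            obtain ⟨rfl, hii⟩ := inr_sigma_inj hq
            rwa [← Fin.ext hii]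
    have hdisj : Disjoint (A.image Sum.inl)
        ((Finset.univ.sigma B).image (Sum.inr : (Σ e : G.edgeSet, Fin (2 * k e)) →
          V ⊕ Σ e : G.edgeSet, Fin (2 * k e))) := by
      rw [Finset.disjoint_left]
      rintro a ha hb
      obtain ⟨x, _, rfl⟩ := Finset.mem_image.mp ha
      obtain ⟨p, _, hp⟩ := Finset.mem_image.mp hb
      exact absurd hp (by simp)
    have hcard' : S'.card = A.card + ∑ e : G.edgeSet, (B e).card := by
      rw [hsplit, Finset.card_union_of_disjoint hdisj,
        Finset.card_image_of_injective _ Sum.inl_injective,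
        Finset.card_image_of_injective _ Sum.inr_injective,
        Finset.card_sigma]
    -- bad edges
    set Bad : Finset G.edgeSet :=
      Finset.univ.filter (fun e => fst e ∈ A ∧ snd e ∈ A) with hBad
    set T : Finset V := A \ Bad.image (fun e => fst e) with hT
    -- per edge bounds
    have noconsec : ∀ (e : G.edgeSet), ∀ i ∈ B e, ∀ j ∈ B e, (j:ℕ) ≠ (i:ℕ) + 1 := by
      intro e i hi j hj hji
      rw [hB] at hi hj
      simp only [Finset.mem_filter, Finset.mem_univ, true_and] at hi hj
      apply hS' _ hi _ hj
      rw [evenSubdivision, SimpleGraph.fromRel_adj]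
      refine ⟨?_, Or.inl (Or.inr (Or.inl ⟨e, i, j, hji, rfl, rfl⟩))⟩
      intro hcongr
      obtain ⟨-, hii⟩ := inr_sigma_inj hcongr
      omega
    have hBle : ∀ e : G.edgeSet, (B e).card ≤ k e := by
      intro e
      exact card_le_of_no_consec (B e) (noconsec e)
    have hBbad : ∀ e ∈ Bad, (B e).card + 1 ≤ k e := by
      intro e he
      rw [hBad] at he
      simp only [Finset.mem_filter, Finset.mem_univ, true_and, hA] at he
      obtain ⟨hf, hs⟩ := he
      apply card_le_of_no_consec' (hk' e) (B e) (noconsec e)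
      · intro i hi hi0
        rw [hB] at hi
        simp only [Finset.mem_filter, Finset.mem_univ, true_and] at hi
        apply hS' _ hf _ hi
        rw [evenSubdivision, SimpleGraph.fromRel_adj]
        exact ⟨by simp, Or.inl (Or.inl ⟨e, i, hi0, rfl, rfl⟩)⟩
      · intro i hi hi1
        rw [hB] at hi
        simp only [Finset.mem_filter, Finset.mem_univ, true_and] at hi
        apply hS' _ hi _ hs
        rw [evenSubdivision, SimpleGraph.fromRel_adj]
        exact ⟨by simp, Or.inl (Or.inr (Or.inr ⟨e, i, hi1, rfl, rfl⟩))⟩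
    -- T is independent in G
    have hTindep : ∀ u ∈ T, ∀ v ∈ T, ¬ G.Adj u v := by
      intro u hu v hv huv
      rw [hT, Finset.mem_sdiff] at hu hv
      have he : s(u, v) ∈ G.edgeSet := G.mem_edgeSet.mpr huv
      set e : G.edgeSet := ⟨s(u, v), he⟩ with hee
      have := hends e
      rw [hee] at this
      simp only [Sym2.eq, Sym2.rel_iff', Prod.mk.injEq, Prod.swap_prod_mk] at this
      have hmem : e ∈ Bad := by
        rw [hBad]
        simp only [Finset.mem_filter, Finset.mem_univ, true_and]
        rcases this with ⟨h1, h2⟩ | ⟨h1, h2⟩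
        · rw [← h1, ← h2]; exact ⟨hu.1, hv.1⟩
        · rw [← h1, ← h2]; exact ⟨hv.1, hu.1⟩
      have himg : fst e ∈ Bad.image (fun e => fst e) :=
        Finset.mem_image.mpr ⟨e, hmem, rfl⟩
      rcases this with ⟨h1, -⟩ | ⟨-, h1⟩
      · apply hu.2; rw [hee] at himg; rwa [← h1] at himg
      · apply hv.2; rw [hee] at himg; rwa [← h1] at himg
    have hTle : T.card ≤ indepNum G := by
      apply Finset.le_sup (f := Finset.card)
      simp only [Finset.mem_filter, Finset.mem_univ, true_and]
      exact hTindep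
    have hAle : A.card ≤ T.card + Bad.card := by
      calc A.card ≤ (T ∪ Bad.image (fun e => fst e)).card := by
            apply Finset.card_le_card
            intro a ha
            rw [Finset.mem_union, hT, Finset.mem_sdiff]
            by_cases h : a ∈ Bad.image (fun e => fst e)
            · exact Or.inr h
            · exact Or.inl ⟨ha, h⟩
        _ ≤ T.card + (Bad.image (fun e => fst e)).card := Finset.card_union_le _ _
        _ ≤ T.card + Bad.card := by
            exact Nat.add_le_add_left (Finset.card_image_le) _
    have hsum : (∑ e : G.edgeSet, (B e).card) + Bad.card ≤ ∑ e : G.edgeSet, k e := by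
      have e1 : ∑ e : G.edgeSet, (B e).card
          = ∑ e ∈ Finset.univ \ Bad, (B e).card + ∑ e ∈ Bad, (B e).card :=
        (Finset.sum_sdiff (Finset.subset_univ Bad)).symm
      have e2 : (∑ e : G.edgeSet, k e)
          = ∑ e ∈ Finset.univ \ Bad, k e + ∑ e ∈ Bad, k e :=
        (Finset.sum_sdiff (Finset.subset_univ Bad)).symm
      have e3 : Bad.card = ∑ _e ∈ Bad, 1 := by simp
      rw [e1, e2, e3]
      have b1 : ∑ e ∈ Finset.univ \ Bad, (B e).card ≤ ∑ e ∈ Finset.univ \ Bad, k e :=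
        Finset.sum_le_sum (fun e _ => hBle e)
      have b2 : ∑ e ∈ Bad, (B e).card + ∑ _e ∈ Bad, 1 ≤ ∑ e ∈ Bad, k e := by
        rw [← Finset.sum_add_distrib]
        exact Finset.sum_le_sum (fun e he => hBbad e he)
      omega
    rw [hcard']
    have := hBle
    omega
  omega
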